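/- Let S_n=Θ_n and let (𝓜_n=(M_n,id); n=1,2,…) be a sequence of Monte Carlo procedures that is consistent to (Π_n; n=1,2,…) and also degenerate. Then (Π_n; n=1,2,…) is degenerate, i.e. there exist measurable maps θ̂_n:X_n→Θ_n such that ∫_{X_n} w_n(Π_n(x_n,·), δ_{θ̂_n(x_n)}) P_n(dx_n)→0 as n→∞. -/

import Mathlib

open MeasureTheory ProbabilityTheory Filter
open scoped ENNReal Topology

set_option linter.unusedSectionVars false
noncomputable section

def blDist {α : Type*} [MeasurableSpace α] [PseudoMetricSpace α]
    (μ ν : Measure α) : ℝ :=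
  ⨆ f : {f : α → ℝ // LipschitzWith 1 f ∧ ∀ x, |f x| ≤ 1},
    |∫ x, f.1 x ∂μ - ∫ x, f.1 x ∂ν|

def empMeas {Θ : Type*} [MeasurableSpace Θ] (m : ℕ) (s : ℕ → Θ) : Measure Θ :=
  (m : ℝ≥0∞)⁻¹ • ∑ i ∈ Finset.range m, Measure.dirac (s i)

namespace BLAux

variable {Θ : Type*} [MeasurableSpace Θ] [MetricSpace Θ] [BorelSpace Θ]

abbrev BLF (Θ : Type*) [MetricSpace Θ] := {f : Θ → ℝ // LipschitzWith 1 f ∧ ∀ x, |f x| ≤ 1}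

instance {Θ : Type*} [MetricSpace Θ] : Nonempty (BLF Θ) :=
  ⟨⟨fun _ => 0, by simpa using (LipschitzWith.const (0:ℝ)).weaken zero_le_one,
    fun x => by norm_num⟩⟩

lemma BLF.integrable (f : BLF Θ) (μ : Measure Θ) [IsFiniteMeasure μ] : Integrable f.1 μ := by
  refine (integrable_const (1:ℝ)).mono' (f.2.1.continuous.measurable.aestronglyMeasurable) ?_
  exact ae_of_all _ fun x => by simpa [Real.norm_eq_abs] using f.2.2 x

lemma BLF.abs_integral_le (f : BLF Θ) (μ : Measure Θ) [IsProbabilityMeasure μ] :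
    |∫ x, f.1 x ∂μ| ≤ 1 := by
  have := norm_integral_le_of_norm_le_const (μ := μ) (f := f.1) (C := 1)
    (ae_of_all _ fun x => by simpa [Real.norm_eq_abs] using f.2.2 x)
  simpa [Real.norm_eq_abs] using this

lemma abs_sub_le_two (f : BLF Θ) (μ ν : Measure Θ) [IsProbabilityMeasure μ]
    [IsProbabilityMeasure ν] : |∫ x, f.1 x ∂μ - ∫ x, f.1 x ∂ν| ≤ 2 := by
  calc |∫ x, f.1 x ∂μ - ∫ x, f.1 x ∂ν| ≤ |∫ x, f.1 x ∂μ| + |∫ x, f.1 x ∂ν| := abs_sub _ _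
  _ ≤ 1 + 1 := add_le_add (f.abs_integral_le μ) (f.abs_integral_le ν)
  _ = 2 := by norm_num

lemma bddAbove (μ ν : Measure Θ) [IsProbabilityMeasure μ] [IsProbabilityMeasure ν] :
    BddAbove (Set.range fun f : BLF Θ => |∫ x, f.1 x ∂μ - ∫ x, f.1 x ∂ν|) := by
  refine ⟨2, ?_⟩
  rintro - ⟨f, rfl⟩
  exact abs_sub_le_two f μ ν

lemma le_blDist (f : BLF Θ) (μ ν : Measure Θ) [IsProbabilityMeasure μ] [IsProbabilityMeasure ν] :
    |∫ x, f.1 x ∂μ - ∫ x, f.1 x ∂ν| ≤ blDist μ ν :=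
  le_ciSup (bddAbove μ ν) f

lemma blDist_nonneg (μ ν : Measure Θ) [IsProbabilityMeasure μ] [IsProbabilityMeasure ν] :
    0 ≤ blDist μ ν := by
  have h := le_blDist ⟨fun _ => 0, by simpa using (LipschitzWith.const (0:ℝ)).weaken zero_le_one,
    fun x => by norm_num⟩ μ ν
  simpa using le_trans (abs_nonneg _) h

lemma blDist_le_two (μ ν : Measure Θ) [IsProbabilityMeasure μ] [IsProbabilityMeasure ν] :
    blDist μ ν ≤ 2 := ciSup_le fun f => abs_sub_le_two f μ ν

lemma blDist_comm (μ ν : Measure Θ) : blDist μ ν = blDist ν μ := by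
  unfold blDist
  exact iSup_congr fun f => abs_sub_comm _ _

lemma blDist_triangle (μ ν ξ : Measure Θ) [IsProbabilityMeasure μ] [IsProbabilityMeasure ν]
    [IsProbabilityMeasure ξ] : blDist μ ξ ≤ blDist μ ν + blDist ν ξ := by
  refine ciSup_le fun f => ?_
  calc |∫ x, f.1 x ∂μ - ∫ x, f.1 x ∂ξ|
      ≤ |∫ x, f.1 x ∂μ - ∫ x, f.1 x ∂ν| + |∫ x, f.1 x ∂ν - ∫ x, f.1 x ∂ξ| := abs_sub_le _ _ _
  _ ≤ blDist μ ν + blDist ν ξ := add_le_add (le_blDist f μ ν) (le_blDist f ν ξ)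

end BLAux

namespace BLAux2
open BLAux

variable {Θ : Type*} [MeasurableSpace Θ] [MetricSpace Θ] [BorelSpace Θ]

lemma empMeas_one (s : ℕ → Θ) : empMeas 1 s = Measure.dirac (s 0) := by
  simp [empMeas]

instance empMeas_prob (m : ℕ) [NeZero m] (s : ℕ → Θ) : IsProbabilityMeasure (empMeas m s) := by
  constructor
  have hm : (m : ℝ≥0∞) ≠ 0 := by exact_mod_cast Nat.cast_ne_zero.mpr (NeZero.ne m)
  simp [empMeas, Measure.smul_apply, Measure.coe_finset_sum, Finset.sum_apply,
    Measure.dirac_apply' _ MeasurableSet.univ, smul_eq_mul]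
  rw [ENNReal.inv_mul_cancel hm (by simp)]

lemma integral_empMeas (m : ℕ) (s : ℕ → Θ) (f : BLF Θ) :
    ∫ x, f.1 x ∂(empMeas m s) = (m : ℝ)⁻¹ * ∑ i ∈ Finset.range m, f.1 (s i) := by
  rw [empMeas, integral_smul_measure, integral_finset_sum_measure]
  · simp [integral_dirac' _ _ f.2.1.continuous.measurable.stronglyMeasurable,
      ENNReal.toReal_inv, smul_eq_mul]
  · intro i _
    exact f.integrable _

lemma integral_dirac_blf (f : BLF Θ) (a : Θ) : ∫ x, f.1 x ∂(Measure.dirac a) = f.1 a :=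
  integral_dirac' _ _ f.2.1.continuous.measurable.stronglyMeasurable

lemma blDist_dirac_lip (μ : Measure Θ) [IsProbabilityMeasure μ] (a b : Θ) :
    blDist μ (Measure.dirac a) ≤ blDist μ (Measure.dirac b) + dist b a := by
  refine ciSup_le fun f => ?_
  rw [integral_dirac_blf]
  calc |∫ x, f.1 x ∂μ - f.1 a| ≤ |∫ x, f.1 x ∂μ - f.1 b| + |f.1 b - f.1 a| := abs_sub_le _ _ _
  _ ≤ blDist μ (Measure.dirac b) + dist b a := by
      refine add_le_add ?_ ?_
      · have := le_blDist f μ (Measure.dirac b)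
        rwa [integral_dirac_blf] at this
      · have := f.2.1.dist_le_mul b a
        rw [Real.dist_eq] at this
        simpa using this

end BLAux2

section Rep
open BLAux BLAux2 TopologicalSpace

variable {Θ : Type*} [MeasurableSpace Θ] [MetricSpace Θ] [BorelSpace Θ]
  [SecondCountableTopology Θ] [Nonempty Θ]

theorem exists_rep :
    ∃ g : ℕ → BLF Θ, ∀ (μ ν : Measure Θ), IsProbabilityMeasure μ → IsProbabilityMeasure ν →
      blDist μ ν = ⨆ k, |∫ x, (g k).1 x ∂μ - ∫ x, (g k).1 x ∂ν| := by
  classical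
  set D : ℕ → Θ := denseSeq Θ with hDdef
  have hD : DenseRange D := denseRange_denseSeq Θ
  set r : BLF Θ → (ℕ → ℝ) := fun f k => f.1 (D k) with hr
  haveI : Nonempty ↥(Set.range r) := ⟨⟨r (Classical.arbitrary _), Set.mem_range_self _⟩⟩
  obtain ⟨t, htc, htd⟩ := TopologicalSpace.exists_countable_dense ↥(Set.range r)
  obtain ⟨u, hu⟩ := htc.exists_eq_range htd.nonempty
  have hur : ∀ k, (u k : ℕ → ℝ) ∈ Set.range r := fun k => (u k).2
  choose g hg using hur
  refine ⟨g, fun μ ν hμ hν => ?_⟩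
  haveI := hμ; haveI := hν
  have hbdd : BddAbove (Set.range fun k => |∫ x, (g k).1 x ∂μ - ∫ x, (g k).1 x ∂ν|) := by
    refine ⟨2, ?_⟩; rintro - ⟨k, rfl⟩; exact abs_sub_le_two _ μ ν
  refine le_antisymm ?_ (ciSup_le fun k => le_blDist (g k) μ ν)
  refine ciSup_le fun f => le_of_forall_pos_le_add fun ε hε => ?_
  set ε' : ℝ := ε / 10 with hε'def
  have hε' : 0 < ε' := by positivity
  -- choose K with small complements
  set W : ℕ → Set Θ := fun K => ⋃ j ∈ Finset.range K, Metric.ball (D j) ε' with hW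
  have hWo : ∀ K, IsOpen (W K) := fun K => isOpen_biUnion fun j _ => Metric.isOpen_ball
  have hWmono : Monotone W := by
    intro K L hKL x hx
    obtain ⟨j, hj, hxj⟩ := Set.mem_iUnion₂.1 hx
    exact Set.mem_iUnion₂.2 ⟨j, Finset.mem_range.2 (lt_of_lt_of_le (Finset.mem_range.1 hj) hKL),
      hxj⟩
  have hWiInter : (⋂ K, (W K)ᶜ) = ∅ := by
    rw [← Set.compl_iUnion, Set.compl_empty_iff]
    apply Set.eq_univ_of_forall
    intro x
    obtain ⟨j, hj⟩ := hD.exists_dist_lt x hε'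
    refine Set.mem_iUnion.2 ⟨j + 1, Set.mem_iUnion₂.2 ⟨j, Finset.self_mem_range_succ j, ?_⟩⟩
    rwa [Metric.mem_ball]
  have hconv : ∀ (ξ : Measure Θ), IsProbabilityMeasure ξ →
      ∃ K₀, ∀ K ≥ K₀, ξ ((W K)ᶜ) < ENNReal.ofReal ε' := by
    intro ξ hξ
    haveI := hξ
    have := tendsto_measure_iInter_atTop (μ := ξ) (s := fun K => (W K)ᶜ)
      (fun K => ((hWo K).isClosed_compl.measurableSet).nullMeasurableSet)
      (fun K L hKL => Set.compl_subset_compl.2 (hWmono hKL)) ⟨0, measure_ne_top _ _⟩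
    rw [hWiInter] at this
    simp only [measure_empty] at this
    have h2 := this.eventually_lt_const (by simp [hε'] : (0:ℝ≥0∞) < ENNReal.ofReal ε')
    rcases (eventually_atTop).1 h2 with ⟨K₀, hK₀⟩
    exact ⟨K₀, hK₀⟩
  obtain ⟨K₁, hK₁⟩ := hconv μ hμ
  obtain ⟨K₂, hK₂⟩ := hconv ν hν
  set K := max K₁ K₂ with hK
  have hμW : μ ((W K)ᶜ) < ENNReal.ofReal ε' := hK₁ K (le_max_left _ _)
  have hνW : ν ((W K)ᶜ) < ENNReal.ofReal ε' := hK₂ K (le_max_right _ _)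
  -- choose k approximating f on D 0, ..., D (K-1)
  have key : ∃ k, ∀ j < K, |(g k).1 (D j) - f.1 (D j)| < ε' := by
    set V : Set (ℕ → ℝ) := ⋂ j ∈ Finset.range K, (fun h : ℕ → ℝ => h j) ⁻¹' Metric.ball (r f j) ε'
      with hV
    have hVo : IsOpen V := isOpen_biInter_finset fun j _ =>
      Metric.isOpen_ball.preimage (continuous_apply j)
    have hfV : r f ∈ V := by
      simp only [hV, Set.mem_iInter]
      intro j _
      simp [Metric.mem_ball, dist_self, hε']
    obtain ⟨y, hyt, hyV⟩ := htd.exists_mem_open (hVo.preimage continuous_subtype_val)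
      ⟨⟨r f, Set.mem_range_self f⟩, hfV⟩
    rw [hu] at hyt
    obtain ⟨k, rfl⟩ := hyt
    refine ⟨k, fun j hj => ?_⟩
    have := Set.mem_iInter.1 hyV j
    have h2 := Set.mem_iInter.1 this (Finset.mem_range.2 hj)
    rw [Set.mem_preimage, Metric.mem_ball, ← hg k] at h2
    simpa [hr, Real.dist_eq] using h2
  obtain ⟨k, hk⟩ := key
  -- pointwise bound
  have hpt : ∀ (ξ : Measure Θ), IsProbabilityMeasure ξ → ξ ((W K)ᶜ) < ENNReal.ofReal ε' →
      |∫ x, f.1 x ∂ξ - ∫ x, (g k).1 x ∂ξ| ≤ 5 * ε' := by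
    intro ξ hξ hξW
    haveI := hξ
    have hint : Integrable (fun x => f.1 x - (g k).1 x) ξ := (BLF.integrable f ξ).sub (BLF.integrable (g k) ξ)
    rw [← integral_sub (BLF.integrable f ξ) (BLF.integrable (g k) ξ)]
    have hb : ∀ x, |f.1 x - (g k).1 x| ≤ 3 * ε' + ((W K)ᶜ).indicator (fun _ => 2) x := by
      intro x
      by_cases hx : x ∈ W K
      · obtain ⟨j, hjmem, hxj⟩ := Set.mem_iUnion₂.1 hx
        rw [Metric.mem_ball] at hxj
        have h1 : |f.1 x - f.1 (D j)| ≤ dist x (D j) := by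
          have := f.2.1.dist_le_mul x (D j); rw [Real.dist_eq] at this; simpa using this
        have h2 : |(g k).1 (D j) - (g k).1 x| ≤ dist (D j) x := by
          have := (g k).2.1.dist_le_mul (D j) x; rw [Real.dist_eq] at this; simpa using this
        have h3 : |f.1 (D j) - (g k).1 (D j)| < ε' := by
          rw [abs_sub_comm]; exact hk j (Finset.mem_range.1 hjmem)
        have : |f.1 x - (g k).1 x| ≤ |f.1 x - f.1 (D j)| + |f.1 (D j) - (g k).1 (D j)|
            + |(g k).1 (D j) - (g k).1 x| :=
          (abs_sub_le _ _ _).trans (add_le_add_left (abs_sub_le _ _ _) _)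
        have hind : ((W K)ᶜ).indicator (fun _ => (2:ℝ)) x = 0 := by
          simp [Set.indicator_of_notMem, hx]
        rw [hind]
        rw [dist_comm] at h2
        nlinarith [hxj, h1, h2, h3, dist_nonneg (x := x) (y := D j)]
      · have hind : ((W K)ᶜ).indicator (fun _ => (2:ℝ)) x = 2 := by
          simp [Set.indicator_of_mem, hx]
        have := abs_sub _ _ |>.trans (add_le_add (f.2.2 x) ((g k).2.2 x))
        rw [hind]; nlinarith [hε']
    have hki : Integrable (fun x => 3 * ε' + ((W K)ᶜ).indicator (fun _ => (2:ℝ)) x) ξ :=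
      (integrable_const _).add ((integrable_const (2:ℝ)).indicator
        (hWo K).isClosed_compl.measurableSet)
    calc |∫ x, (f.1 x - (g k).1 x) ∂ξ| ≤ ∫ x, |f.1 x - (g k).1 x| ∂ξ := by
          simpa [Real.norm_eq_abs] using norm_integral_le_integral_norm (fun x => f.1 x - (g k).1 x) (μ := ξ)
    _ ≤ ∫ x, (3 * ε' + ((W K)ᶜ).indicator (fun _ => 2) x) ∂ξ := by
          refine integral_mono_of_nonneg (ae_of_all _ fun x => abs_nonneg _) hki (ae_of_all _ hb)
    _ = 3 * ε' + (ξ ((W K)ᶜ)).toReal * 2 := by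
          rw [integral_add (integrable_const _) ((integrable_const (2:ℝ)).indicator
            (hWo K).isClosed_compl.measurableSet), integral_const,
            integral_indicator_const _ (hWo K).isClosed_compl.measurableSet]
          simp [smul_eq_mul, Measure.real]
    _ ≤ 3 * ε' + ε' * 2 := by
          have : (ξ ((W K)ᶜ)).toReal ≤ ε' :=
            ENNReal.toReal_le_of_le_ofReal hε'.le hξW.le
          nlinarith
    _ = 5 * ε' := by ring
  have hμ5 := hpt μ hμ hμW
  have hν5 := hpt ν hν hνW
  have hgk : |∫ x, (g k).1 x ∂μ - ∫ x, (g k).1 x ∂ν| ≤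
      ⨆ k, |∫ x, (g k).1 x ∂μ - ∫ x, (g k).1 x ∂ν| := le_ciSup hbdd k
  calc |∫ x, f.1 x ∂μ - ∫ x, f.1 x ∂ν|
      ≤ |∫ x, f.1 x ∂μ - ∫ x, (g k).1 x ∂μ| + |∫ x, (g k).1 x ∂μ - ∫ x, (g k).1 x ∂ν|
        + |∫ x, (g k).1 x ∂ν - ∫ x, f.1 x ∂ν| :=
          (abs_sub_le _ _ _).trans (add_le_add_left (abs_sub_le _ _ _) _)
  _ ≤ 5 * ε' + (⨆ k, |∫ x, (g k).1 x ∂μ - ∫ x, (g k).1 x ∂ν|) + 5 * ε' := by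
        refine add_le_add (add_le_add hμ5 hgk) ?_
        rw [abs_sub_comm]; exact hν5
  _ ≤ (⨆ k, |∫ x, (g k).1 x ∂μ - ∫ x, (g k).1 x ∂ν|) + ε := by
        rw [hε'def]; ring_nf; linarith
end Rep

attribute [irreducible] blDist empMeas

section Meas
open BLAux BLAux2

lemma nonempty_of_prob {α : Type*} [MeasurableSpace α] (μ : Measure α)
    [IsProbabilityMeasure μ] : Nonempty α := by
  by_contra h
  rw [not_nonempty_iff] at h
  have h1 := measure_univ (μ := μ)
  rw [Set.univ_eq_empty_iff.2 h, measure_empty] at h1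
  simp at h1

lemma integrable_of_bd {α : Type*} [MeasurableSpace α] (μ : Measure α) [IsFiniteMeasure μ]
    {f : α → ℝ} (hf : Measurable f) (C : ℝ) (h : ∀ x, |f x| ≤ C) : Integrable f μ :=
  (integrable_const C).mono' hf.aestronglyMeasurable
    (ae_of_all _ fun x => by simpa [Real.norm_eq_abs] using h x)

lemma abs_integral_le_of {α : Type*} [MeasurableSpace α] (μ : Measure α) [IsProbabilityMeasure μ]
    {f : α → ℝ} (C : ℝ) (h : ∀ x, |f x| ≤ C) : |∫ x, f x ∂μ| ≤ C := by
  have := norm_integral_le_of_norm_le_const (μ := μ) (f := f) (C := C)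
    (ae_of_all _ fun x => by simpa [Real.norm_eq_abs] using h x)
  simpa [Real.norm_eq_abs] using this

variable {Θ : Type*} [MeasurableSpace Θ] [MetricSpace Θ] [BorelSpace Θ]
variable {α : Type*} [MeasurableSpace α]

lemma blDist_abs_le_two (μ ν : Measure Θ) [IsProbabilityMeasure μ] [IsProbabilityMeasure ν] :
    |blDist μ ν| ≤ 2 :=
  abs_le.2 ⟨by linarith [blDist_nonneg μ ν], blDist_le_two μ ν⟩

lemma measurable_blDist_of (g : ℕ → BLF Θ)
    (μ ν : α → Measure Θ)
    (hrep : ∀ a, blDist (μ a) (ν a) = ⨆ k, |∫ x, (g k).1 x ∂(μ a) - ∫ x, (g k).1 x ∂(ν a)|)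
    (hμm : ∀ k, Measurable fun a => ∫ x, (g k).1 x ∂(μ a))
    (hνm : ∀ k, Measurable fun a => ∫ x, (g k).1 x ∂(ν a)) :
    Measurable fun a => blDist (μ a) (ν a) := by
  have h : (fun a => blDist (μ a) (ν a))
      = fun a => ⨆ k, |∫ x, (g k).1 x ∂(μ a) - ∫ x, (g k).1 x ∂(ν a)| := funext hrep
  rw [h]
  exact Measurable.iSup fun k => ((hμm k).sub (hνm k)).abs

lemma measurable_integral_empMeas (m : ℕ) (f : BLF Θ) :
    Measurable fun s : ℕ → Θ => ∫ x, f.1 x ∂(empMeas m s) := by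
  have h : (fun s : ℕ → Θ => ∫ x, f.1 x ∂(empMeas m s))
      = fun s => (m : ℝ)⁻¹ * ∑ i ∈ Finset.range m, f.1 (s i) :=
    funext fun s => integral_empMeas m s f
  rw [h]
  exact (Finset.measurable_sum _ fun i _ =>
    (f.2.1.continuous.measurable.comp (measurable_pi_apply i))).const_mul _

lemma measurable_integral_kernel {β : Type*} [MeasurableSpace β] (κ : Kernel β Θ)
    [IsSFiniteKernel κ] (f : BLF Θ) :
    Measurable fun b => ∫ x, f.1 x ∂(κ b) := by
  have h : StronglyMeasurable fun p : β × Θ => f.1 p.2 :=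
    (f.2.1.continuous.measurable.comp measurable_snd).stronglyMeasurable
  exact h.integral_kernel_prod_right'.measurable

end Meas

open BLAux BLAux2

set_option maxHeartbeats 2000000 in
/-- Proposition: a consistent degenerate procedure has degenerate targets.
Let `S_n = Θ_n` and let `𝓜_n = (M_n, id)` (empirical-measure estimators) be consistent to
`(Π_n)` and degenerate.  Then `(Π_n)` is degenerate: there are measurable maps
`θ̂_n : X_n → Θ_n` with `∫ w_n(Π_n(x,·), δ_{θ̂_n(x)}) P_n(dx) → 0`. -/
theorem stmt3 {X Θ : ℕ → Type*}
    [∀ n, MeasurableSpace (X n)] [∀ n, MeasurableSpace (Θ n)]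
    [∀ n, MetricSpace (Θ n)] [∀ n, CompleteSpace (Θ n)]
    [∀ n, SecondCountableTopology (Θ n)] [∀ n, BorelSpace (Θ n)]
    (P : (n : ℕ) → Measure (X n)) (hP : ∀ n, IsProbabilityMeasure (P n))
    (M : (n : ℕ) → Kernel (X n) (ℕ → Θ n)) (hM : ∀ n, IsMarkovKernel (M n))
    (Pi : (n : ℕ) → Kernel (X n) (Θ n)) (hPi : ∀ n, IsMarkovKernel (Pi n))
    (hcons : ∀ mseq : ℕ → ℕ, Tendsto mseq atTop atTop →
      Tendsto (fun n => ∫ x, ∫ s, blDist (empMeas (mseq n) s) ((Pi n) x)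
        ∂((M n) x) ∂(P n)) atTop (𝓝 0))
    (hdeg : ∀ m : ℕ, 1 ≤ m →
      Tendsto (fun n => ∫ x, ∫ s, blDist (empMeas m s) (empMeas 1 s)
        ∂((M n) x) ∂(P n)) atTop (𝓝 0)) :
    ∃ θhat : (n : ℕ) → X n → Θ n, (∀ n, Measurable (θhat n)) ∧
      Tendsto (fun n => ∫ x, blDist ((Pi n) x) (Measure.dirac (θhat n x)) ∂(P n))
        atTop (𝓝 0) := by
  classical
  haveI := hP
  haveI := hM
  haveI := hPi
  haveI hXne : ∀ n, Nonempty (X n) := fun n => nonempty_of_prob (P n)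
  haveI hTne : ∀ n, Nonempty (Θ n) := fun n =>
    nonempty_of_prob ((Pi n) (Classical.arbitrary (X n)))
  choose g hrep using fun n => exists_rep (Θ := Θ n)
  set D : (n : ℕ) → ℕ → Θ n := fun n => TopologicalSpace.denseSeq (Θ n) with hDdef
  have hDD : ∀ n, DenseRange (D n) := fun n => TopologicalSpace.denseRange_denseSeq (Θ n)
  -- measurability of x ↦ blDist (Π x) (dirac (D n k))
  have hGmeas : ∀ n k, Measurable fun x => blDist ((Pi n) x) (Measure.dirac (D n k)) := by
    intro n k
    exact measurable_blDist_of (α := X n) (Θ := Θ n) (g n)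
      (fun x => (Pi n) x) (fun _ => Measure.dirac (D n k))
      (fun x => hrep n _ _ inferInstance inferInstance)
      (fun j => measurable_integral_kernel (Pi n) (g n j)) (fun j => measurable_const)
  -- the inf function
  set q : (n : ℕ) → X n → ℝ := fun n x => ⨅ k, blDist ((Pi n) x) (Measure.dirac (D n k))
    with hqdef
  have hqbdd : ∀ n x, BddBelow (Set.range fun k => blDist ((Pi n) x) (Measure.dirac (D n k))) := by
    intro n x
    exact ⟨0, by rintro - ⟨k, rfl⟩; exact blDist_nonneg _ _⟩
  have hqmeas : ∀ n, Measurable (q n) := fun n => Measurable.iInf (hGmeas n)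
  have hqnonneg : ∀ n x, 0 ≤ q n x := fun n x => le_ciInf fun k => blDist_nonneg _ _
  have hqle : ∀ n x θ, q n x ≤ blDist ((Pi n) x) (Measure.dirac θ) := by
    intro n x θ
    refine le_of_forall_pos_le_add fun ε hε => ?_
    obtain ⟨k, hk⟩ := (hDD n).exists_dist_lt θ hε
    calc q n x ≤ blDist ((Pi n) x) (Measure.dirac (D n k)) := ciInf_le (hqbdd n x) k
    _ ≤ blDist ((Pi n) x) (Measure.dirac θ) + dist θ (D n k) := blDist_dirac_lip _ _ _
    _ ≤ blDist ((Pi n) x) (Measure.dirac θ) + ε := by linarith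
  -- selection
  have hpos : ∀ n : ℕ, (0:ℝ) < 1/(n+1) := fun n => by positivity
  have hsel : ∀ n x, ∃ k, blDist ((Pi n) x) (Measure.dirac (D n k)) < q n x + 1/(n+1) := by
    intro n x
    refine exists_lt_of_ciInf_lt ?_
    have : q n x = ⨅ k, blDist ((Pi n) x) (Measure.dirac (D n k)) := rfl
    rw [← this]
    linarith [hpos n]
  set θh : (n : ℕ) → X n → Θ n := fun n x => D n (Nat.find (hsel n x)) with hθdef
  have hθmeas : ∀ n, Measurable (θh n) := fun n =>
    Measurable.find (f := fun k (_ : X n) => D n k) (fun k => measurable_const)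
      (fun k => measurableSet_lt (hGmeas n k) ((hqmeas n).add measurable_const))
      (hsel n)
  have hθspec : ∀ n x, blDist ((Pi n) x) (Measure.dirac (θh n x)) < q n x + 1/(n+1) :=
    fun n x => Nat.find_spec (hsel n x)
  -- joint measurability of the blDist integrands
  have hBmeas : ∀ n m, 1 ≤ m →
      Measurable fun s : ℕ → Θ n => blDist (empMeas m s) (empMeas 1 s) := by
    intro n m hm
    haveI : NeZero m := ⟨by omega⟩
    exact measurable_blDist_of (α := ℕ → Θ n) (Θ := Θ n) (g n)
      (fun s => empMeas m s) (fun s => empMeas 1 s)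
      (fun s => hrep n _ _ inferInstance inferInstance)
      (fun j => measurable_integral_empMeas m (g n j))
      (fun j => measurable_integral_empMeas 1 (g n j))
  have hCmeas : ∀ n m, 1 ≤ m →
      Measurable fun p : X n × (ℕ → Θ n) => blDist (empMeas m p.2) ((Pi n) p.1) := by
    intro n m hm
    haveI : NeZero m := ⟨by omega⟩
    exact measurable_blDist_of (α := X n × (ℕ → Θ n)) (Θ := Θ n) (g n)
      (fun p => empMeas m p.2) (fun p => (Pi n) p.1)
      (fun p => hrep n _ _ inferInstance inferInstance)
      (fun j => (measurable_integral_empMeas m (g n j)).comp measurable_snd)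
      (fun j => (measurable_integral_kernel (Pi n) (g n j)).comp measurable_fst)
  have hIBmeas : ∀ n m, 1 ≤ m →
      Measurable fun x : X n => ∫ s, blDist (empMeas m s) (empMeas 1 s) ∂((M n) x) :=
    fun n m hm =>
      (((hBmeas n m hm).comp measurable_snd).stronglyMeasurable.integral_kernel_prod_right'
        (κ := M n)).measurable
  have hICmeas : ∀ n m, 1 ≤ m →
      Measurable fun x : X n => ∫ s, blDist (empMeas m s) ((Pi n) x) ∂((M n) x) :=
    fun n m hm =>
      ((hCmeas n m hm).stronglyMeasurable.integral_kernel_prod_right' (κ := M n)).measurable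
  -- the key triangle inequality between the double integrals
  have hkey : ∀ n m, 1 ≤ m →
      (∫ x, ∫ s, blDist (empMeas 1 s) ((Pi n) x) ∂((M n) x) ∂(P n))
        ≤ (∫ x, ∫ s, blDist (empMeas m s) (empMeas 1 s) ∂((M n) x) ∂(P n))
          + ∫ x, ∫ s, blDist (empMeas m s) ((Pi n) x) ∂((M n) x) ∂(P n) := by
    intro n m hm
    haveI : NeZero m := ⟨by omega⟩
    have hinner : ∀ x, (∫ s, blDist (empMeas 1 s) ((Pi n) x) ∂((M n) x))
        ≤ (∫ s, blDist (empMeas m s) (empMeas 1 s) ∂((M n) x))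
          + ∫ s, blDist (empMeas m s) ((Pi n) x) ∂((M n) x) := by
      intro x
      have intB : Integrable (fun s => blDist (empMeas m s) (empMeas 1 s)) ((M n) x) :=
        integrable_of_bd _ (hBmeas n m hm) 2 (fun s => blDist_abs_le_two _ _)
      have hCx : Measurable fun s : ℕ → Θ n => blDist (empMeas m s) ((Pi n) x) :=
        measurable_blDist_of (α := ℕ → Θ n) (Θ := Θ n) (g n)
          (fun s => empMeas m s) (fun _ => (Pi n) x)
          (fun s => hrep n _ _ inferInstance inferInstance)
          (fun j => measurable_integral_empMeas m (g n j)) (fun j => measurable_const)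
      have intC : Integrable (fun s => blDist (empMeas m s) ((Pi n) x)) ((M n) x) :=
        integrable_of_bd _ hCx 2 (fun s => blDist_abs_le_two _ _)
      calc (∫ s, blDist (empMeas 1 s) ((Pi n) x) ∂((M n) x))
          ≤ ∫ s, (blDist (empMeas m s) (empMeas 1 s)
              + blDist (empMeas m s) ((Pi n) x)) ∂((M n) x) := by
            refine integral_mono_of_nonneg (ae_of_all _ fun s => blDist_nonneg _ _)
              (intB.add intC) (ae_of_all _ fun s => ?_)
            calc blDist (empMeas 1 s) ((Pi n) x)
                ≤ blDist (empMeas 1 s) (empMeas m s) + blDist (empMeas m s) ((Pi n) x) :=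
                  blDist_triangle _ _ _
            _ = blDist (empMeas m s) (empMeas 1 s) + blDist (empMeas m s) ((Pi n) x) := by
                  rw [blDist_comm (empMeas 1 s)]
      _ = _ := integral_add intB intC
    have intIB : Integrable (fun x => ∫ s, blDist (empMeas m s) (empMeas 1 s) ∂((M n) x))
        (P n) := integrable_of_bd _ (hIBmeas n m hm) 2
          (fun x => abs_integral_le_of _ 2 (fun s => blDist_abs_le_two _ _))
    have intIC : Integrable (fun x => ∫ s, blDist (empMeas m s) ((Pi n) x) ∂((M n) x))
        (P n) := integrable_of_bd _ (hICmeas n m hm) 2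
          (fun x => abs_integral_le_of _ 2 (fun s => blDist_abs_le_two _ _))
    calc (∫ x, ∫ s, blDist (empMeas 1 s) ((Pi n) x) ∂((M n) x) ∂(P n))
        ≤ ∫ x, ((∫ s, blDist (empMeas m s) (empMeas 1 s) ∂((M n) x))
            + ∫ s, blDist (empMeas m s) ((Pi n) x) ∂((M n) x)) ∂(P n) :=
          integral_mono_of_nonneg
            (ae_of_all _ fun x => integral_nonneg fun s => blDist_nonneg _ _)
            (intIB.add intIC) (ae_of_all _ hinner)
    _ = _ := integral_add intIB intIC
  -- nonnegativity of the double integrals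
  have hanonneg : ∀ n, 0 ≤ ∫ x, ∫ s, blDist (empMeas 1 s) ((Pi n) x) ∂((M n) x) ∂(P n) :=
    fun n => integral_nonneg fun x => integral_nonneg fun s => blDist_nonneg _ _
  have hdnonneg : ∀ n m, 1 ≤ m →
      0 ≤ ∫ x, ∫ s, blDist (empMeas m s) (empMeas 1 s) ∂((M n) x) ∂(P n) := by
    intro n m hm
    haveI : NeZero m := ⟨by omega⟩
    exact integral_nonneg fun x => integral_nonneg fun s => blDist_nonneg _ _
  -- diagonal sequence
  have hNex : ∀ k : ℕ, ∃ N : ℕ, ∀ n ≥ N,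
      |∫ x, ∫ s, blDist (empMeas (k+1) s) (empMeas 1 s) ∂((M n) x) ∂(P n)| < 1/(k+1) := by
    intro k
    obtain ⟨N, hN⟩ := Metric.tendsto_atTop.1 (hdeg (k+1) (by omega)) (1/(k+1)) (by positivity)
    exact ⟨N, fun n hn => by simpa [Real.dist_eq] using hN n hn⟩
  choose N hN using hNex
  set φ : ℕ → ℕ := fun k => (Finset.range (k+1)).sup N + k with hφdef
  have hφN : ∀ k, N k ≤ φ k := fun k =>
    le_trans (Finset.le_sup (Finset.self_mem_range_succ k)) (Nat.le_add_right _ _)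
  have hφk : ∀ k, k ≤ φ k := fun k => Nat.le_add_left k _
  set cs : ℕ → ℕ := fun n => Nat.findGreatest (fun k => φ k ≤ n) n with hcdef
  have hms1 : ∀ n, 1 ≤ cs n + 1 := fun n => Nat.le_add_left 1 (cs n)
  have hmstop : Tendsto (fun n => cs n + 1) atTop atTop := by
    refine tendsto_atTop.2 fun K => ?_
    filter_upwards [eventually_ge_atTop (φ K)] with n hn
    have hK : K ≤ cs n := Nat.le_findGreatest ((hφk K).trans hn) hn
    omega
  have hcspec : ∀ n, φ 0 ≤ n → φ (cs n) ≤ n := fun n hn =>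
    Nat.findGreatest_spec (P := fun k => φ k ≤ n) (m := 0) (n := n) (Nat.zero_le n) hn
  -- the degenerate part along the diagonal
  have hdms : Tendsto (fun n =>
      ∫ x, ∫ s, blDist (empMeas (cs n + 1) s) (empMeas 1 s) ∂((M n) x) ∂(P n))
      atTop (𝓝 0) := by
    refine squeeze_zero' (g := fun n => 1/((cs n : ℝ)+1)) ?_ ?_ ?_
    · exact Eventually.of_forall fun n => hdnonneg n (cs n + 1) (hms1 n)
    · filter_upwards [eventually_ge_atTop (φ 0)] with n hn
      have h1 : N (cs n) ≤ n := le_trans (hφN (cs n)) (hcspec n hn)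
      have h2 := hN (cs n) n h1
      exact le_trans (le_abs_self _) h2.le
    · have heq : (fun n => 1/((cs n : ℝ)+1)) = (fun k : ℕ => 1/(k : ℝ)) ∘ (fun n => cs n + 1) := by
        funext n
        simp only [Function.comp]
        push_cast
        ring
      rw [heq]
      exact tendsto_one_div_atTop_nhds_zero_nat.comp hmstop
  have hems := hcons (fun n => cs n + 1) hmstop
  -- a n → 0
  have ha : Tendsto (fun n =>
      ∫ x, ∫ s, blDist (empMeas 1 s) ((Pi n) x) ∂((M n) x) ∂(P n)) atTop (𝓝 0) := by
    refine squeeze_zero' (Eventually.of_forall hanonneg)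
      (Eventually.of_forall fun n => hkey n (cs n + 1) (hms1 n)) ?_
    simpa using hdms.add hems
  -- final bound
  refine ⟨θh, hθmeas, ?_⟩
  have hbn : ∀ n, (∫ x, blDist ((Pi n) x) (Measure.dirac (θh n x)) ∂(P n))
      ≤ (∫ x, ∫ s, blDist (empMeas 1 s) ((Pi n) x) ∂((M n) x) ∂(P n)) + 1/(n+1) := by
    intro n
    have intq : Integrable (q n) (P n) := integrable_of_bd _ (hqmeas n) 2
      (fun x => abs_le.2 ⟨by linarith [hqnonneg n x],
        le_trans (hqle n x (θh n x)) (blDist_le_two _ _)⟩)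
    have intIA : Integrable (fun x => ∫ s, blDist (empMeas 1 s) ((Pi n) x) ∂((M n) x)) (P n) :=
      integrable_of_bd _ (hICmeas n 1 le_rfl) 2
        (fun x => abs_integral_le_of _ 2 (fun s => blDist_abs_le_two _ _))
    have hqIA : ∀ x, q n x ≤ ∫ s, blDist (empMeas 1 s) ((Pi n) x) ∂((M n) x) := by
      intro x
      have hAx : Measurable fun s : ℕ → Θ n => blDist (empMeas 1 s) ((Pi n) x) :=
        measurable_blDist_of (α := ℕ → Θ n) (Θ := Θ n) (g n)
          (fun s => empMeas 1 s) (fun _ => (Pi n) x)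
          (fun s => hrep n _ _ inferInstance inferInstance)
          (fun j => measurable_integral_empMeas 1 (g n j)) (fun j => measurable_const)
      have intAx : Integrable (fun s => blDist (empMeas 1 s) ((Pi n) x)) ((M n) x) :=
        integrable_of_bd _ hAx 2 (fun s => blDist_abs_le_two _ _)
      have h2 : ∀ s : ℕ → Θ n, q n x ≤ blDist (empMeas 1 s) ((Pi n) x) := by
        intro s
        rw [empMeas_one, blDist_comm]
        exact hqle n x (s 0)
      have h3 := integral_mono_of_nonneg (f := fun _ : ℕ → Θ n => q n x)
        (μ := (M n) x) (ae_of_all _ fun _ => hqnonneg n x) intAx (ae_of_all _ h2)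
      simpa using h3
    calc (∫ x, blDist ((Pi n) x) (Measure.dirac (θh n x)) ∂(P n))
        ≤ ∫ x, (q n x + 1/(n+1)) ∂(P n) :=
          integral_mono_of_nonneg (ae_of_all _ fun x => blDist_nonneg _ _)
            (intq.add (integrable_const _)) (ae_of_all _ fun x => (hθspec n x).le)
    _ = (∫ x, q n x ∂(P n)) + 1/(n+1) := by
          rw [integral_add intq (integrable_const _), integral_const]
          simp
    _ ≤ (∫ x, ∫ s, blDist (empMeas 1 s) ((Pi n) x) ∂((M n) x) ∂(P n)) + 1/(n+1) := by
          have := integral_mono_of_nonneg (ae_of_all (P n) fun x => hqnonneg n x) intIA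
            (ae_of_all _ hqIA)
          linarith
  refine squeeze_zero' (g := fun n =>
      (∫ x, ∫ s, blDist (empMeas 1 s) ((Pi n) x) ∂((M n) x) ∂(P n)) + 1/((n:ℝ)+1))
    (Eventually.of_forall fun n => integral_nonneg fun x => blDist_nonneg _ _)
    (Eventually.of_forall hbn) ?_
  have h1 : Tendsto (fun n : ℕ => 1/((n:ℝ)+1)) atTop (𝓝 0) :=
    tendsto_one_div_add_atTop_nhds_zero_nat
  simpa using ha.add h1
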